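/- Let M be a symmetric irreducible r×r 0–1 transition matrix, let A : Σ̂_M → ℝ be Lipschitz continuous, and fix y⁰ ∈ Σ*_M. For each β > 0, let φ_β be the forward effective potential for βA normalized by φ_β(y⁰) = 0. Then for every sequence β_n → ∞ there exist a subsequence β_{n_k} and a Lipschitz continuous function V : Σ*_M → ℝ with V(y⁰) = 0 and Lip(V) ≤ ‖A‖₀ + Lip(A) such that φ_{β_{n_k}}/β_{n_k} → V uniformly. -/

import Mathlib

open MeasureTheory Filter Topology Real

/-- The one-sided subshift of finite type defined by the 0-1 transition matrix `M`:
sequences `x : ℕ → Fin r` with `M (x j) (x (j+1)) = 1` for all `j`. -/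
abbrev Shift (r : ℕ) (M : Fin r → Fin r → Bool) : Type :=
  {x : ℕ → Fin r // ∀ j : ℕ, M (x j) (x (j + 1)) = true}

variable {r : ℕ} {M : Fin r → Fin r → Bool}

/-- The matrix `M` is irreducible: any symbol can be joined to any other by an
admissible path of positive length. -/
def Irred (M : Fin r → Fin r → Bool) : Prop :=
  ∀ i j : Fin r, ∃ n : ℕ, ∃ w : Fin (n + 2) → Fin r,
    w 0 = i ∧ w (Fin.last (n + 1)) = j ∧
    ∀ k : Fin (n + 1), M (w k.castSucc) (w k.succ) = true

/-- The left shift map on the subshift. -/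
def shiftMap (x : Shift r M) : Shift r M :=
  ⟨fun j => x.1 (j + 1), fun j => x.2 (j + 1)⟩

/-- The metric `d(x,y) = Λ^k`, `k = min { j : x_j ≠ y_j }`, `d(x,x) = 0`. -/
noncomputable def shiftDist (Λ : ℝ) (x y : Shift r M) : ℝ :=
  letI := Classical.decEq (Shift r M)
  if h : x = y then 0
  else Λ ^ Nat.find (show ∃ j : ℕ, x.1 j ≠ y.1 j by
    by_contra hc
    push_neg at hc
    exact h (Subtype.ext (funext hc)))

/-- `φ` is Lipschitz with constant `K` for the metric `shiftDist Λ`. -/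
def LipBnd (Λ K : ℝ) (φ : Shift r M → ℝ) : Prop :=
  ∀ x y : Shift r M, |φ x - φ y| ≤ K * shiftDist Λ x y

/-- `φ` is Lipschitz continuous for the metric `shiftDist Λ`. -/
def IsLip (Λ : ℝ) (φ : Shift r M → ℝ) : Prop :=
  ∃ K : ℝ, LipBnd Λ K φ

/-- The best Lipschitz constant of `φ`. -/
noncomputable def lipC (Λ : ℝ) (φ : Shift r M → ℝ) : ℝ :=
  sInf {K : ℝ | 0 ≤ K ∧ LipBnd Λ K φ}

/-- The uniform norm `‖φ‖₀`. -/
noncomputable def unorm (φ : Shift r M → ℝ) : ℝ :=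
  ⨆ x : Shift r M, |φ x|

/-- An observable on the natural extension `Σ̂_M ⊂ Σ*_M × Σ_M` (with `Σ*_M`
canonically identified with `Σ_M`), as a function of `(y, x)`; it is Lipschitz with
constant `K` for the max-metric. -/
def LipBnd2 (Λ K : ℝ) (A : Shift r M → Shift r M → ℝ) : Prop :=
  ∀ y x y' x' : Shift r M,
    |A y x - A y' x'| ≤ K * max (shiftDist Λ y y') (shiftDist Λ x x')

/-- `A` is Lipschitz continuous on `Σ̂_M`. -/
def IsLip2 (Λ : ℝ) (A : Shift r M → Shift r M → ℝ) : Prop :=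
  ∃ K : ℝ, LipBnd2 Λ K A

/-- The best Lipschitz constant of the observable `A`. -/
noncomputable def lipC2 (Λ : ℝ) (A : Shift r M → Shift r M → ℝ) : ℝ :=
  sInf {K : ℝ | 0 ≤ K ∧ LipBnd2 Λ K A}

/-- The uniform norm `‖A‖₀` of the observable. -/
noncomputable def unorm2 (A : Shift r M → Shift r M → ℝ) : ℝ :=
  ⨆ p : Shift r M × Shift r M, |A p.1 p.2|

/-- `μ` is a `σ`-invariant Borel probability measure on the subshift. -/
def InvProb (μ : Measure (Shift r M)) : Prop :=
  IsProbabilityMeasure μ ∧ μ.map shiftMap = μ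

/-- Entropy of the cylinder partition of length `n`:
`H_n(μ) = - ∑_{|w| = n} μ([w]) log μ([w])`. -/
noncomputable def cylEnt (μ : Measure (Shift r M)) (n : ℕ) : ℝ :=
  ∑ w : Fin n → Fin r,
    Real.negMulLog ((μ {x : Shift r M | ∀ i : Fin n, x.1 i.1 = w i}).toReal)

/-- The Kolmogorov–Sinai entropy `h_μ(σ)` of an invariant measure on the subshift:
since the cylinder partition is generating and `n ↦ H_n(μ)` is subadditive,
`h_μ(σ) = lim_n H_n(μ)/n = inf_n H_n(μ)/n`. -/
noncomputable def entropy (μ : Measure (Shift r M)) : ℝ :=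
  ⨅ n : ℕ, cylEnt μ (n + 1) / (n + 1)

/-- The operator
`G⁺_A(φ)(y) = sup_{μ ∈ M_σ} [ ∫ (A(y,x) + φ(x)) dμ(x) + h_μ(σ) ]`. -/
noncomputable def Gplus (A : Shift r M → Shift r M → ℝ)
    (φ : Shift r M → ℝ) (y : Shift r M) : ℝ :=
  sSup {t : ℝ | ∃ μ : Measure (Shift r M), InvProb μ ∧
    t = ∫ x, (A y x + φ x) ∂μ + entropy μ}

/-- The maximal ergodic average `max_{μ ∈ M_σ} ∫ B dμ`. -/
noncomputable def maxErg (B : Shift r M → ℝ) : ℝ :=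
  sSup {t : ℝ | ∃ μ : Measure (Shift r M), InvProb μ ∧ t = ∫ x, B x ∂μ}

/-- The quotient norm on functions modulo additive constants:
`‖g‖_c = inf_{γ ∈ ℝ} ‖g + γ‖₀`. -/
noncomputable def cnorm (g : Shift r M → ℝ) : ℝ :=
  ⨅ γ : ℝ, unorm (fun x => g x + γ)

section dist
variable {Λ : ℝ} (hΛ0 : 0 < Λ) (hΛ1 : Λ < 1)

lemma shiftDist_self (x : Shift r M) : shiftDist Λ x x = 0 := by
  simp [shiftDist]

include hΛ0 in
lemma shiftDist_nonneg (x y : Shift r M) : 0 ≤ shiftDist Λ x y := by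
  unfold shiftDist
  split
  · exact le_refl 0
  · positivity

include hΛ0 hΛ1 in
lemma shiftDist_le_pow {p : ℕ} {x y : Shift r M} (h : ∀ i, i < p → x.1 i = y.1 i) :
    shiftDist Λ x y ≤ Λ ^ p := by
  unfold shiftDist
  split
  · positivity
  · rename_i hne
    apply pow_le_pow_of_le_one hΛ0.le hΛ1.le
    rw [Nat.le_find_iff]
    intro m hm hne'
    exact hne' (h m hm)

include hΛ0 hΛ1 in
lemma shiftDist_le_one (x y : Shift r M) : shiftDist Λ x y ≤ 1 := by
  simpa using shiftDist_le_pow hΛ0 hΛ1 (p := 0) (x := x) (y := y) (by omega)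

include hΛ0 in
lemma shiftDist_pos {x y : Shift r M} (h : x ≠ y) : 0 < shiftDist Λ x y := by
  unfold shiftDist
  split
  · exact absurd ‹_› h
  · positivity

lemma shiftDist_symm (x y : Shift r M) : shiftDist Λ x y = shiftDist Λ y x := by
  unfold shiftDist
  by_cases h : x = y
  · simp [h]
  · rw [dif_neg h, dif_neg (Ne.symm h)]
    have key : ∀ (h1 : ∃ j : ℕ, x.1 j ≠ y.1 j) (h2 : ∃ j : ℕ, y.1 j ≠ x.1 j),
        Nat.find h1 = Nat.find h2 := by
      intro h1 h2
      apply le_antisymm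
      · exact Nat.find_le (Ne.symm (Nat.find_spec h2))
      · exact Nat.find_le (Ne.symm (Nat.find_spec h1))
    congr 1
    apply key

end dist
section ptx
variable {Λ : ℝ} {nxt : Fin r → Fin r}

/-- auxiliary: the sequence following `x` for `p` steps then following `nxt`. -/
def ptxFun (nxt : Fin r → Fin r) (x : Shift r M) (p : ℕ) : ℕ → Fin r :=
  fun j => if j < p then x.1 j else nxt^[j + 1 - p] (x.1 (p - 1))

lemma ptx_mem (hnxt : ∀ i, M i (nxt i) = true) (x : Shift r M) (p : ℕ) :
    ∀ j, M (ptxFun nxt x p j) (ptxFun nxt x p (j + 1)) = true := by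
  intro j
  by_cases h1 : j + 1 < p
  · simp only [ptxFun, if_pos (by omega : j < p), if_pos h1]
    exact x.2 j
  · by_cases h2 : j < p
    · simp only [ptxFun, if_pos h2, if_neg (by omega : ¬ j + 1 < p)]
      have e1 : j + 1 + 1 - p = 1 := by omega
      have e2 : p - 1 = j := by omega
      rw [e1, e2]
      simpa using hnxt (x.1 j)
    · simp only [ptxFun, if_neg h2, if_neg (by omega : ¬ j + 1 < p)]
      have e1 : j + 1 + 1 - p = (j + 1 - p) + 1 := by omega
      rw [e1, Function.iterate_succ_apply']
      exact hnxt _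

/-- The canonical point of the subshift with the same first `p` symbols as `x`. -/
def ptx (hnxt : ∀ i, M i (nxt i) = true) (x : Shift r M) (p : ℕ) : Shift r M :=
  ⟨ptxFun nxt x p, ptx_mem hnxt x p⟩

lemma ptx_prefix (hnxt : ∀ i, M i (nxt i) = true) (x : Shift r M) (p : ℕ) :
    ∀ i, i < p → (ptx hnxt x p).1 i = x.1 i := by
  intro i hi
  simp [ptx, ptxFun, if_pos hi]

lemma ptx_congr (hnxt : ∀ i, M i (nxt i) = true) {x z : Shift r M} {p : ℕ} (hp : 1 ≤ p)
    (h : ∀ i, i < p → x.1 i = z.1 i) : ptx hnxt x p = ptx hnxt z p := by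
  apply Subtype.ext
  funext j
  simp only [ptx, ptxFun]
  by_cases hj : j < p
  · rw [if_pos hj, if_pos hj, h j hj]
  · rw [if_neg hj, if_neg hj, h (p - 1) (by omega)]

end ptx

section meas
variable {Λ : ℝ} {nxt : Fin r → Fin r}

lemma measurable_of_lipBnd (hΛ0 : 0 < Λ) (hΛ1 : Λ < 1)
    (hnxt : ∀ i, M i (nxt i) = true) {K : ℝ} {g : Shift r M → ℝ}
    (hg : LipBnd Λ K g) : Measurable g := by
  classical
  set K' := max K 0 with hK'def
  have hK' : ∀ x y : Shift r M, |g x - g y| ≤ K' * shiftDist Λ x y := fun x y =>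
    (hg x y).trans (mul_le_mul_of_nonneg_right (le_max_left _ _) (shiftDist_nonneg hΛ0 _ _))
  let h : (p : ℕ) → (Fin p → Fin r) → ℝ := fun p w =>
    if hw : ∃ x : Shift r M, ∀ i : Fin p, x.1 i = w i then g (ptx hnxt hw.choose p) else 0
  let G : ℕ → Shift r M → ℝ := fun p x => h (p + 1) (fun i => x.1 i)
  have hGm : ∀ p, Measurable (G p) := fun p =>
    (measurable_of_countable (h (p + 1))).comp
      (measurable_pi_lambda _ (fun i => (measurable_pi_apply (i : ℕ)).comp measurable_subtype_coe))
  have hGx : ∀ p x, G p x = g (ptx hnxt x (p + 1)) := by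
    intro p x
    have hw : ∃ z : Shift r M, ∀ i : Fin (p + 1), z.1 i = x.1 i := ⟨x, fun _ => rfl⟩
    simp only [G, h, dif_pos hw]
    congr 1
    exact ptx_congr hnxt (Nat.le_add_left 1 p) (fun i hi => hw.choose_spec ⟨i, hi⟩)
  have hlim : Tendsto G atTop (𝓝 g) := by
    rw [tendsto_pi_nhds]
    intro x
    rw [tendsto_iff_dist_tendsto_zero]
    apply squeeze_zero (g := fun p => K' * Λ ^ (p + 1)) (fun p => dist_nonneg)
    · intro p
      rw [hGx p x, Real.dist_eq]
      exact (hK' _ _).trans (mul_le_mul_of_nonneg_left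
        (shiftDist_le_pow hΛ0 hΛ1 (ptx_prefix hnxt x (p + 1))) (le_max_right K 0))
    · have := ((tendsto_pow_atTop_nhds_zero_of_lt_one hΛ0.le hΛ1).comp
        (tendsto_add_atTop_nat 1)).const_mul K'
      simpa using this
  exact measurable_of_tendsto_metrizable hGm hlim

lemma measurable_shiftMap : Measurable (shiftMap (r := r) (M := M)) := by
  apply Measurable.subtype_mk
  exact measurable_pi_lambda _ (fun j => (measurable_pi_apply (j + 1)).comp measurable_subtype_coe)

end meas

section entropy

lemma negMulLog_le_one {p : ℝ} (h0 : 0 ≤ p) (h1 : p ≤ 1) : Real.negMulLog p ≤ 1 := by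
  rcases eq_or_lt_of_le h0 with h | h
  · simp [← h, Real.negMulLog_zero]
  · have l1 : Real.log p⁻¹ ≤ p⁻¹ - 1 := Real.log_le_sub_one_of_pos (inv_pos.mpr h)
    have l2 : Real.log p⁻¹ = -Real.log p := Real.log_inv p
    have l3 : p * p⁻¹ = 1 := mul_inv_cancel₀ h.ne'
    rw [Real.negMulLog]
    nlinarith

variable {r : ℕ} {M : Fin r → Fin r → Bool}

lemma toReal_prob_le_one (μ : Measure (Shift r M)) [IsProbabilityMeasure μ]
    (s : Set (Shift r M)) : (μ s).toReal ≤ 1 := by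
  have h := prob_le_one (μ := μ) (s := s)
  simpa using ENNReal.toReal_mono ENNReal.one_ne_top h

lemma entropy_nonneg (μ : Measure (Shift r M)) [IsProbabilityMeasure μ] :
    0 ≤ entropy μ := by
  apply le_ciInf
  intro n
  apply div_nonneg _ (by positivity)
  apply Finset.sum_nonneg
  intro w _
  exact Real.negMulLog_nonneg ENNReal.toReal_nonneg (toReal_prob_le_one μ _)

lemma entropy_le_card (μ : Measure (Shift r M)) [IsProbabilityMeasure μ] :
    entropy μ ≤ r := by
  have hbdd : BddBelow (Set.range fun n : ℕ => cylEnt μ (n + 1) / (n + 1)) := by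
    refine ⟨0, ?_⟩
    rintro t ⟨n, rfl⟩
    apply div_nonneg _ (by positivity)
    apply Finset.sum_nonneg
    intro w _
    exact Real.negMulLog_nonneg ENNReal.toReal_nonneg (toReal_prob_le_one μ _)
  refine (ciInf_le hbdd 0).trans ?_
  have : cylEnt μ (0 + 1) ≤ r := by
    unfold cylEnt
    calc ∑ w : Fin (0 + 1) → Fin r,
          Real.negMulLog ((μ {x : Shift r M | ∀ i : Fin (0 + 1), x.1 i.1 = w i}).toReal)
        ≤ ∑ _w : Fin (0 + 1) → Fin r, (1 : ℝ) := by
          apply Finset.sum_le_sum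
          intro w _
          exact negMulLog_le_one ENNReal.toReal_nonneg (toReal_prob_le_one μ _)
      _ = (Fintype.card (Fin (0 + 1) → Fin r) : ℝ) := by simp
      _ ≤ r := by simp [Fintype.card_fun]
  simpa using this

end entropy

section invmeas

variable {r : ℕ} {M : Fin r → Fin r → Bool}

lemma exists_invProb (hSym : ∀ i j, M i j = M j i) (y0 : Shift r M) :
    ∃ μ : Measure (Shift r M), InvProb μ := by
  set i := y0.1 0 with hi
  set j := y0.1 1 with hj
  have hij : M i j = true := y0.2 0
  have hji : M j i = true := by rw [hSym]; exact hij
  let xs : ℕ → Fin r := fun n => if n % 2 = 0 then i else j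
  have hx : ∀ n, M (xs n) (xs (n + 1)) = true := by
    intro n
    by_cases h : n % 2 = 0
    · have h' : ¬ (n + 1) % 2 = 0 := by omega
      simp only [xs, if_pos h, if_neg h']
      exact hij
    · have h' : (n + 1) % 2 = 0 := by omega
      simp only [xs, if_neg h, if_pos h']
      exact hji
  let x : Shift r M := ⟨xs, hx⟩
  have hσσ : shiftMap (shiftMap x) = x := by
    apply Subtype.ext
    funext n
    show xs (n + 1 + 1) = xs n
    have : (n + 1 + 1) % 2 = n % 2 := by omega
    simp only [xs, this]
  refine ⟨(2 : ENNReal)⁻¹ • (Measure.dirac x + Measure.dirac (shiftMap x)), ?_, ?_⟩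
  · constructor
    simp only [Measure.smul_apply, Measure.add_apply, Measure.dirac_apply' _ MeasurableSet.univ]
    rw [Set.indicator_of_mem (Set.mem_univ _), Set.indicator_of_mem (Set.mem_univ _)]
    show (2 : ENNReal)⁻¹ * (1 + 1) = 1
    rw [one_add_one_eq_two, ENNReal.inv_mul_cancel (by norm_num) (by norm_num)]
  · rw [Measure.map_smul, Measure.map_add _ _ measurable_shiftMap,
      Measure.map_dirac' measurable_shiftMap, Measure.map_dirac' measurable_shiftMap, hσσ,
      add_comm]

end invmeas

section lipc

variable {r : ℕ} {M : Fin r → Fin r → Bool} {Λ : ℝ} {A : Shift r M → Shift r M → ℝ}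

lemma max_dist_nonneg (hΛ0 : 0 < Λ) (y y' x x' : Shift r M) :
    0 ≤ max (shiftDist Λ y y') (shiftDist Λ x x') :=
  le_trans (shiftDist_nonneg hΛ0 y y') (le_max_left _ _)

lemma exists_lip2_nonneg (hΛ0 : 0 < Λ) (hA : IsLip2 Λ A) :
    ∃ K, 0 ≤ K ∧ LipBnd2 Λ K A := by
  obtain ⟨K0, hK0⟩ := hA
  refine ⟨max K0 0, le_max_right _ _, ?_⟩
  intro y x y' x'
  exact (hK0 y x y' x').trans
    (mul_le_mul_of_nonneg_right (le_max_left _ _) (max_dist_nonneg hΛ0 _ _ _ _))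

lemma lipC2_nonneg (hΛ0 : 0 < Λ) (hA : IsLip2 Λ A) : 0 ≤ lipC2 Λ A :=
  le_csInf (exists_lip2_nonneg hΛ0 hA) (fun _ hK => hK.1)

lemma lipBnd2_lipC2 (hΛ0 : 0 < Λ) (hA : IsLip2 Λ A) : LipBnd2 Λ (lipC2 Λ A) A := by
  intro y x y' x'
  set m := max (shiftDist Λ y y') (shiftDist Λ x x') with hm
  have hm0 : 0 ≤ m := max_dist_nonneg hΛ0 _ _ _ _
  obtain ⟨K0, hK0⟩ := exists_lip2_nonneg hΛ0 hA
  rcases eq_or_lt_of_le hm0 with h | h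
  · have h1 := hK0.2 y x y' x'
    rw [← hm, ← h, mul_zero] at h1
    rw [← h, mul_zero]
    exact h1
  · rw [← div_le_iff₀ h]
    apply le_csInf (exists_lip2_nonneg hΛ0 hA)
    intro K hK
    rw [div_le_iff₀ h]
    exact hK.2 y x y' x'

lemma bddAbove_abs_A (hΛ0 : 0 < Λ) (hΛ1 : Λ < 1) (hA : IsLip2 Λ A) (y0 : Shift r M) :
    BddAbove (Set.range fun p : Shift r M × Shift r M => |A p.1 p.2|) := by
  obtain ⟨K0, hK00, hK0⟩ := exists_lip2_nonneg hΛ0 hA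
  refine ⟨|A y0 y0| + K0, ?_⟩
  rintro t ⟨⟨y, x⟩, rfl⟩
  have h1 := hK0 y x y0 y0
  have h2 : max (shiftDist Λ y y0) (shiftDist Λ x y0) ≤ 1 :=
    max_le (shiftDist_le_one hΛ0 hΛ1 _ _) (shiftDist_le_one hΛ0 hΛ1 _ _)
  have h3 : |A y x| - |A y0 y0| ≤ K0 * 1 :=
    le_trans (le_trans (abs_sub_abs_le_abs_sub _ _) h1)
      (mul_le_mul_of_nonneg_left h2 hK00)
  simp only []
  linarith

lemma abs_le_unorm2 (hΛ0 : 0 < Λ) (hΛ1 : Λ < 1) (hA : IsLip2 Λ A) (y0 : Shift r M)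
    (y x : Shift r M) : |A y x| ≤ unorm2 A :=
  le_ciSup (bddAbove_abs_A hΛ0 hΛ1 hA y0) (⟨y, x⟩ : Shift r M × Shift r M)

lemma unorm2_nonneg : 0 ≤ unorm2 A :=
  Real.iSup_nonneg (fun _ => abs_nonneg _)

end lipc

section key

variable {r : ℕ} {M : Fin r → Fin r → Bool} {Λ : ℝ} {A : Shift r M → Shift r M → ℝ}
  {nxt : Fin r → Fin r}

/-- The key comparison: the effective-potential equation forces a Lipschitz bound. -/
lemma key_lip (hΛ0 : 0 < Λ) (hΛ1 : Λ < 1) (hnxt : ∀ i, M i (nxt i) = true)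
    (hA : IsLip2 Λ A) (y0 : Shift r M)
    (μ0 : Measure (Shift r M)) (hμ0 : InvProb μ0)
    {β : ℝ} (hβ : 0 < β) {φβ : Shift r M → ℝ} {lamβ : ℝ} {Kφ : ℝ}
    (hφ : LipBnd Λ Kφ φβ) (hφ0 : φβ y0 = 0)
    (hG : ∀ y, Gplus (fun y x => β * A y x) φβ y = φβ y + lamβ) :
    ∀ y y', φβ y - φβ y' ≤ β * (lipC2 Λ A * shiftDist Λ y y') := by
  set L := lipC2 Λ A with hLdef
  have hL0 : 0 ≤ L := lipC2_nonneg hΛ0 hA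
  have hLA : LipBnd2 Λ L A := lipBnd2_lipC2 hΛ0 hA
  intro y y'
  have hd0 : 0 ≤ shiftDist Λ y y' := shiftDist_nonneg hΛ0 y y'
  set d := shiftDist Λ y y' with hddef
  -- measurability of sections of A
  have hmeas : ∀ z : Shift r M, Measurable (fun x => A z x) := by
    intro z
    apply measurable_of_lipBnd hΛ0 hΛ1 hnxt (K := L)
    intro x x'
    have h := hLA z x z x'
    rwa [shiftDist_self, max_eq_right (shiftDist_nonneg hΛ0 x x')] at h
  -- the S-sets
  set S : Shift r M → Set ℝ := fun z =>
    {t : ℝ | ∃ μ : Measure (Shift r M), InvProb μ ∧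
      t = ∫ x, (β * A z x + φβ x) ∂μ + entropy μ} with hSdef
  have hGS : ∀ z, Gplus (fun y x => β * A y x) φβ z = sSup (S z) := fun z => rfl
  -- uniform bound on φβ
  have hKφ' : ∀ x, |φβ x| ≤ max Kφ 0 := by
    intro x
    have h := hφ x y0
    rw [hφ0, sub_zero] at h
    calc |φβ x| ≤ Kφ * shiftDist Λ x y0 := h
      _ ≤ max Kφ 0 * shiftDist Λ x y0 :=
          mul_le_mul_of_nonneg_right (le_max_left _ _) (shiftDist_nonneg hΛ0 _ _)
      _ ≤ max Kφ 0 * 1 :=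
          mul_le_mul_of_nonneg_left (shiftDist_le_one hΛ0 hΛ1 _ _) (le_max_right _ _)
      _ = max Kφ 0 := mul_one _
  -- upper bound on elements of S z
  have hub : ∀ z : Shift r M, ∀ t ∈ S z, t ≤ β * unorm2 A + max Kφ 0 + r := by
    rintro z t ⟨μ, hμ, rfl⟩
    haveI := hμ.1
    have hbound : ∀ x, ‖β * A z x + φβ x‖ ≤ β * unorm2 A + max Kφ 0 := by
      intro x
      calc ‖β * A z x + φβ x‖ ≤ |β * A z x| + |φβ x| := abs_add_le _ _
        _ ≤ β * unorm2 A + max Kφ 0 := by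
            rw [abs_mul, abs_of_pos hβ]
            exact add_le_add
              (mul_le_mul_of_nonneg_left (abs_le_unorm2 hΛ0 hΛ1 hA y0 z x) hβ.le) (hKφ' x)
    have hint := norm_integral_le_of_norm_le_const (μ := μ)
      (f := fun x => β * A z x + φβ x) (ae_of_all _ hbound)
    rw [probReal_univ, mul_one] at hint
    have h1 : ∫ x, (β * A z x + φβ x) ∂μ ≤ β * unorm2 A + max Kφ 0 :=
      (le_abs_self _).trans hint
    have h2 := entropy_le_card μ
    linarith
  have hbddS : ∀ z : Shift r M, BddAbove (S z) := fun z => ⟨_, hub z⟩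
  have hneS : ∀ z : Shift r M, (S z).Nonempty := fun z => ⟨_, μ0, hμ0, rfl⟩
  -- the difference function
  set g : Shift r M → ℝ := fun x => β * A y x - β * A y' x with hgdef
  have hgm : Measurable g := ((hmeas y).const_mul β).sub ((hmeas y').const_mul β)
  have hgb : ∀ x, ‖g x‖ ≤ β * (L * d) := by
    intro x
    have h := hLA y x y' x
    rw [shiftDist_self, max_eq_left hd0] at h
    calc ‖g x‖ = β * |A y x - A y' x| := by
          rw [show g x = β * (A y x - A y' x) by rw [hgdef]; ring, Real.norm_eq_abs,
            abs_mul, abs_of_pos hβ]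
      _ ≤ β * (L * d) := mul_le_mul_of_nonneg_left h hβ.le
  -- the sSup comparison
  have hsup : sSup (S y) ≤ sSup (S y') + β * (L * d) := by
    apply csSup_le (hneS y)
    rintro t ⟨μ, hμ, rfl⟩
    haveI := hμ.1
    set F : Shift r M → ℝ := fun x => β * A y x + φβ x with hFdef
    set F' : Shift r M → ℝ := fun x => β * A y' x + φβ x with hF'def
    have hFF' : F = fun x => F' x + g x := by
      funext x; rw [hFdef, hF'def, hgdef]; ring
    have hgi : Integrable g μ :=
      Integrable.mono' (integrable_const (β * (L * d))) hgm.aestronglyMeasurable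
        (ae_of_all _ hgb)
    have hgint : ∫ x, g x ∂μ ≤ β * (L * d) := by
      have h := norm_integral_le_of_norm_le_const (μ := μ) (f := g) (ae_of_all _ hgb)
      rw [probReal_univ, mul_one] at h
      exact (le_abs_self _).trans h
    have hint : ∫ x, F x ∂μ ≤ ∫ x, F' x ∂μ + β * (L * d) := by
      by_cases hF' : Integrable F' μ
      · have heq : ∫ x, F x ∂μ = ∫ x, F' x ∂μ + ∫ x, g x ∂μ := by
          rw [hFF']
          exact integral_add hF' hgi
        rw [heq]
        linarith
      · have hF : ¬ Integrable F μ := by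
          intro h
          apply hF'
          have : F' = fun x => F x - g x := by
            funext x
            rw [hFF']
            ring
          rw [this]
          exact h.sub hgi
        rw [integral_undef hF, integral_undef hF']
        have : 0 ≤ β * (L * d) := mul_nonneg hβ.le (mul_nonneg hL0 hd0)
        linarith
    have hmem : (∫ x, F' x ∂μ + entropy μ) ∈ S y' := ⟨μ, hμ, rfl⟩
    have := le_csSup (hbddS y') hmem
    show ∫ x, F x ∂μ + entropy μ ≤ sSup (S y') + β * (L * d)
    linarith
  have h1 := hG y
  have h2 := hG y'
  rw [hGS] at h1 h2
  linarith [hsup, h1, h2]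

end key

/-- With `φ_β` the forward effective potential for `βA` normalized by
`φ_β(y⁰) = 0`, every sequence `β_n → ∞` admits a subsequence `β_{n_k}` along which
`φ_{β_{n_k}}/β_{n_k}` converges uniformly to a Lipschitz `V` with `V(y⁰) = 0` and
`Lip(V) ≤ ‖A‖₀ + Lip(A)`. -/
theorem effective_potential_subsequence_limit
    (r : ℕ) (hr : 2 ≤ r) (M : Fin r → Fin r → Bool)
    (hSym : ∀ i j, M i j = M j i) (hIrr : Irred M)
    (Λ : ℝ) (hΛ : Λ ∈ Set.Ioo (0 : ℝ) 1)
    (A : Shift r M → Shift r M → ℝ) (hA : IsLip2 Λ A)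
    (y0 : Shift r M)
    (φ : ℝ → Shift r M → ℝ) (lam : ℝ → ℝ)
    (heff : ∀ β > (0 : ℝ), IsLip Λ (φ β) ∧ φ β y0 = 0 ∧
      ∀ y, Gplus (fun y x => β * A y x) (φ β) y = φ β y + lam β) :
    ∀ b : ℕ → ℝ, (∀ n, 0 < b n) → Filter.Tendsto b Filter.atTop Filter.atTop →
      ∃ ι : ℕ → ℕ, StrictMono ι ∧ ∃ V : Shift r M → ℝ,
        V y0 = 0 ∧ LipBnd Λ (unorm2 A + lipC2 Λ A) V ∧
        TendstoUniformly (fun k y => φ (b (ι k)) y / b (ι k)) V Filter.atTop := by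
  intro b hb hbtop
  obtain ⟨hΛ0, hΛ1⟩ := hΛ
  classical
  -- a successor function on symbols
  have hnxt_ex : ∀ i : Fin r, ∃ j, M i j = true := by
    intro i
    obtain ⟨n, w, h0, _, hedge⟩ := hIrr i i
    refine ⟨w (0 : Fin (n + 1)).succ, ?_⟩
    have h := hedge 0
    rwa [show (0 : Fin (n + 1)).castSucc = 0 by simp, h0] at h
  obtain ⟨nxt, hnxt⟩ : ∃ nxt : Fin r → Fin r, ∀ i, M i (nxt i) = true :=
    ⟨fun i => (hnxt_ex i).choose, fun i => (hnxt_ex i).choose_spec⟩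
  obtain ⟨μ0, hμ0⟩ := exists_invProb hSym y0
  set L := lipC2 Λ A with hLdef
  have hL0 : 0 ≤ L := lipC2_nonneg hΛ0 hA
  set f : ℕ → Shift r M → ℝ := fun n z => φ (b n) z / b n with hfdef
  have hflip : ∀ n z z', |f n z - f n z'| ≤ L * shiftDist Λ z z' := by
    intro n z z'
    obtain ⟨⟨Kφ, hφK⟩, hφ0, hGeq⟩ := heff (b n) (hb n)
    have h1 := key_lip hΛ0 hΛ1 hnxt hA y0 μ0 hμ0 (hb n) hφK hφ0 hGeq z z'
    have h2 := key_lip hΛ0 hΛ1 hnxt hA y0 μ0 hμ0 (hb n) hφK hφ0 hGeq z' z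
    rw [shiftDist_symm] at h2
    have habs : |φ (b n) z - φ (b n) z'| ≤ b n * (L * shiftDist Λ z z') :=
      abs_sub_le_iff.mpr ⟨h1, h2⟩
    have hfz : |f n z - f n z'| = |φ (b n) z - φ (b n) z'| / b n := by
      show |φ (b n) z / b n - φ (b n) z' / b n| = _
      rw [div_sub_div_same, abs_div, abs_of_pos (hb n)]
    rw [hfz, div_le_iff₀ (hb n)]
    calc |φ (b n) z - φ (b n) z'| ≤ b n * (L * shiftDist Λ z z') := habs
      _ = L * shiftDist Λ z z' * b n := by ring
  have hf0 : ∀ n, f n y0 = 0 := by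
    intro n
    rw [hfdef]
    simp [(heff (b n) (hb n)).2.1]
  have hfbd : ∀ n z, |f n z| ≤ L := by
    intro n z
    have h := hflip n z y0
    rw [hf0, sub_zero] at h
    calc |f n z| ≤ L * shiftDist Λ z y0 := h
      _ ≤ L * 1 := mul_le_mul_of_nonneg_left (shiftDist_le_one hΛ0 hΛ1 _ _) hL0
      _ = L := mul_one L
  -- countable family of approximation points
  haveI : Nonempty ((p : ℕ) × (Fin p → Fin r)) := ⟨⟨0, fun i => i.elim0⟩⟩
  obtain ⟨e, he⟩ := exists_surjective_nat ((p : ℕ) × (Fin p → Fin r))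
  set P : ((p : ℕ) × (Fin p → Fin r)) → Shift r M := fun u =>
    if hw : ∃ x : Shift r M, ∀ i : Fin u.1, x.1 i = u.2 i then ptx hnxt hw.choose u.1
    else y0 with hPdef
  have hPx : ∀ (x : Shift r M) (p : ℕ), 1 ≤ p → P ⟨p, fun i => x.1 i⟩ = ptx hnxt x p := by
    intro x p hp
    have hw : ∃ z : Shift r M, ∀ i : Fin p, z.1 i = x.1 i := ⟨x, fun _ => rfl⟩
    rw [hPdef]
    dsimp only
    rw [dif_pos hw]
    exact ptx_congr hnxt hp (fun i hi => hw.choose_spec ⟨i, hi⟩)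
  -- sequential compactness of the coordinate sequence
  set g : ℕ → ℕ → ℝ := fun n m => f n (P (e m)) with hgdef
  have hgmem : ∀ n, g n ∈ Set.univ.pi (fun _ : ℕ => Set.Icc (-L) L) := by
    intro n
    intro m _
    exact ⟨neg_le_of_abs_le (hfbd n _), le_of_abs_le (hfbd n _)⟩
  have hcomp : IsCompact (Set.univ.pi fun _ : ℕ => Set.Icc (-L) L) :=
    isCompact_univ_pi (fun _ => isCompact_Icc)
  obtain ⟨a, -, ι, hι, hconv⟩ := hcomp.isSeqCompact hgmem
  have hconv' : ∀ m, Tendsto (fun k => f (ι k) (P (e m))) atTop (𝓝 (a m)) :=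
    fun m => (tendsto_pi_nhds.mp hconv) m
  -- uniform Cauchy
  have hUCraw : ∀ ε > (0 : ℝ), ∃ N, ∀ k ≥ N, ∀ l ≥ N, ∀ x : Shift r M,
      dist (f (ι k) x) (f (ι l) x) < ε := by
    intro ε hε
    have htend : Tendsto (fun p : ℕ => L * Λ ^ p) atTop (𝓝 0) := by
      simpa using (tendsto_pow_atTop_nhds_zero_of_lt_one hΛ0.le hΛ1).const_mul L
    obtain ⟨p, hpe, hp1⟩ :=
      ((htend.eventually_lt_const (by linarith : (0:ℝ) < ε/4)).and
        (eventually_ge_atTop 1)).exists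
    have hcau : ∀ w : Fin p → Fin r, ∃ N, ∀ k ≥ N, ∀ l ≥ N,
        dist (f (ι k) (P ⟨p, w⟩)) (f (ι l) (P ⟨p, w⟩)) < ε / 2 := by
      intro w
      obtain ⟨m, hm⟩ := he ⟨p, w⟩
      have hc := (hconv' m).cauchySeq
      rw [Metric.cauchySeq_iff] at hc
      obtain ⟨N, hN⟩ := hc (ε / 2) (by linarith)
      refine ⟨N, fun k hk l hl => ?_⟩
      have := hN k hk l hl
      rwa [hm] at this
    choose N hN using hcau
    refine ⟨Finset.univ.sup N, ?_⟩
    intro k hk l hl x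
    set w : Fin p → Fin r := fun i => x.1 i with hwdef
    set q := ptx hnxt x p with hq
    have hqP : P ⟨p, w⟩ = q := hPx x p hp1
    have hdq : shiftDist Λ x q ≤ Λ ^ p := by
      apply shiftDist_le_pow hΛ0 hΛ1
      intro i hi
      exact (ptx_prefix hnxt x p i hi).symm
    have hbig : ∀ kk, |f (ι kk) x - f (ι kk) q| ≤ ε / 4 := by
      intro kk
      refine (hflip _ x q).trans ?_
      have := mul_le_mul_of_nonneg_left hdq hL0
      linarith
    have hkN : N w ≤ k := le_trans (Finset.le_sup (Finset.mem_univ w)) hk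
    have hlN : N w ≤ l := le_trans (Finset.le_sup (Finset.mem_univ w)) hl
    have hmid := hN w k hkN l hlN
    rw [hqP, Real.dist_eq] at hmid
    rw [Real.dist_eq]
    have e1 := hbig k
    have e2 := hbig l
    have tri : |f (ι k) x - f (ι l) x| ≤
        |f (ι k) x - f (ι k) q| + |f (ι k) q - f (ι l) q| + |f (ι l) q - f (ι l) x| := by
      have t1 := abs_sub_le (f (ι k) x) (f (ι k) q) (f (ι l) x)
      have t2 := abs_sub_le (f (ι k) q) (f (ι l) q) (f (ι l) x)
      linarith
    rw [abs_sub_comm (f (ι l) q)] at tri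
    linarith
  have hUC : UniformCauchySeqOn (fun k => f (ι k)) atTop Set.univ := by
    rw [Metric.uniformCauchySeqOn_iff]
    intro ε hε
    obtain ⟨N, hN⟩ := hUCraw ε hε
    exact ⟨N, fun k hk l hl x _ => hN k hk l hl x⟩
  have hptw : ∀ x : Shift r M, ∃ v : ℝ, Tendsto (fun k => f (ι k) x) atTop (𝓝 v) := by
    intro x
    apply cauchySeq_tendsto_of_complete
    rw [Metric.cauchySeq_iff]
    intro ε hε
    obtain ⟨N, hN⟩ := hUCraw ε hε
    exact ⟨N, fun k hk l hl => hN k hk l hl x⟩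
  choose V hV using hptw
  have hTU : TendstoUniformly (fun k z => f (ι k) z) V atTop :=
    tendstoUniformlyOn_univ.mp (hUC.tendstoUniformlyOn_of_tendsto (fun x _ => hV x))
  refine ⟨ι, hι, V, ?_, ?_, ?_⟩
  · have h0 : Tendsto (fun k => f (ι k) y0) atTop (𝓝 (0 : ℝ)) := by
      simpa [hf0] using (tendsto_const_nhds : Tendsto (fun _ : ℕ => (0:ℝ)) atTop (𝓝 0))
    exact tendsto_nhds_unique (hV y0) h0
  · intro z z'
    have hzz : Tendsto (fun k => |f (ι k) z - f (ι k) z'|) atTop (𝓝 |V z - V z'|) :=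
      ((hV z).sub (hV z')).abs
    have hle := le_of_tendsto hzz (Filter.Eventually.of_forall fun k => hflip (ι k) z z')
    calc |V z - V z'| ≤ L * shiftDist Λ z z' := hle
      _ ≤ (unorm2 A + L) * shiftDist Λ z z' :=
        mul_le_mul_of_nonneg_right (by linarith [unorm2_nonneg (A := A)])
          (shiftDist_nonneg hΛ0 _ _)
  · exact hTU
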